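/- arXiv:2204.09732 — 3 statements merged into one kernel-verified Lean document; each statement's English description precedes it below -/
import Mathlib

section
/- Let Y be a metric space and let V₁, …, V_N and W be subsets of Y, with f_ℓ : V_ℓ → ℝ functions and g : W → ℝ ≡ 1 the constant function 1. Suppose Λ ≥ 0, b > 0, and: (i) each f_ℓ is c_ℓ-Lipschitz with c_ℓ ≤ Λ and takes values in [0,1]; (ii) there is a Λ-Lipschitz function f defined on a set containing compact sets A_ℓ ⊆ V_ℓ and W, with f_ℓ = f on A_ℓ and f = 1 on W, such that every point of V_ℓ is within distance b/10 of A_ℓ; (iii) the pairwise distances between distinct A_ℓ are at least 8b/10 + 2·(b/10), and d(V_ℓ, W) ≥ 9b/10 for each ℓ. Then the function ĥ on (⋃_ℓ V_ℓ) ∪ W defined by ĥ = f_ℓ on V_ℓ and ĥ = 1 on W is 3Λ-Lipschitz. -/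
open Metric Set

theorem glued_function_lipschitz {Y : Type*} [MetricSpace Y]
    (N : ℕ) (V A : Fin N → Set Y) (W : Set Y)
    (fl : Fin N → Y → ℝ) (f : Y → ℝ) (Λ : NNReal) (c : Fin N → NNReal) (b : ℝ)
    (hb : 0 < b)
    (hc : ∀ ℓ, c ℓ ≤ Λ)
    (hfl_lip : ∀ ℓ, LipschitzOnWith (c ℓ) (fl ℓ) (V ℓ))
    (hfl_range : ∀ ℓ, ∀ x ∈ V ℓ, fl ℓ x ∈ Icc (0 : ℝ) 1)
    (hf_lip : LipschitzOnWith Λ f ((⋃ ℓ, A ℓ) ∪ W))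
    (hAV : ∀ ℓ, A ℓ ⊆ V ℓ) (hAcpt : ∀ ℓ, IsCompact (A ℓ))
    (hfl_eq : ∀ ℓ, EqOn (fl ℓ) f (A ℓ))
    (hfW : ∀ w ∈ W, f w = 1)
    (hnear : ∀ ℓ, ∀ x ∈ V ℓ, ∃ a ∈ A ℓ, dist x a ≤ b / 10)
    (hsep : ∀ ℓ ℓ', ℓ ≠ ℓ' → ∀ x ∈ A ℓ, ∀ y ∈ A ℓ',
      8 * b / 10 + 2 * (b / 10) ≤ dist x y)
    (hVW : ∀ ℓ, ∀ x ∈ V ℓ, ∀ w ∈ W, 9 * b / 10 ≤ dist x w)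
    (h : Y → ℝ)
    (hhV : ∀ ℓ, ∀ x ∈ V ℓ, h x = fl ℓ x)
    (hhW : ∀ w ∈ W, h w = 1) :
    LipschitzOnWith (3 * Λ) h ((⋃ ℓ, V ℓ) ∪ W) := by
  rw [lipschitzOnWith_iff_dist_le_mul]
  have hΛ : (0:ℝ) ≤ Λ := Λ.coe_nonneg
  have hcΛ : ∀ ℓ, ((c ℓ : ℝ)) ≤ Λ := fun ℓ => NNReal.coe_le_coe.2 (hc ℓ)
  have hfld := fun ℓ => lipschitzOnWith_iff_dist_le_mul.mp (hfl_lip ℓ)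
  have hfd := lipschitzOnWith_iff_dist_le_mul.mp hf_lip
  -- mixed V–W case
  have key : ∀ ℓ, ∀ x ∈ V ℓ, ∀ w ∈ W, dist (h x) (h w) ≤ 3 * Λ * dist x w := by
    intro ℓ x hx w hw
    obtain ⟨a, ha, hxa⟩ := hnear ℓ x hx
    have haU : a ∈ (⋃ ℓ, A ℓ) ∪ W := Or.inl (mem_iUnion.2 ⟨ℓ, ha⟩)
    have hwU : w ∈ (⋃ ℓ, A ℓ) ∪ W := Or.inr hw
    have h1 : dist (fl ℓ x) (fl ℓ a) ≤ Λ * dist x a :=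
      (hfld ℓ x hx a (hAV ℓ ha)).trans
        (mul_le_mul_of_nonneg_right (hcΛ ℓ) dist_nonneg)
    have h2 : dist (f a) (f w) ≤ Λ * dist a w := hfd a haU w hwU
    have htri : dist a w ≤ dist x a + dist x w := by
      rw [dist_comm x a]; exact dist_triangle a x w
    have hd : 9 * b / 10 ≤ dist x w := hVW ℓ x hx w hw
    have heq : dist (h x) (h w) ≤ dist (fl ℓ x) (fl ℓ a) + dist (f a) (f w) := by
      rw [hhV ℓ x hx, hhW w hw, ← hfW w hw, ← hfl_eq ℓ ha]
      exact dist_triangle _ _ _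
    have : dist (h x) (h w) ≤ Λ * (b/10) + Λ * (b/10 + dist x w) := by
      refine heq.trans (add_le_add (h1.trans ?_) (h2.trans ?_))
      · exact mul_le_mul_of_nonneg_left hxa hΛ
      · exact mul_le_mul_of_nonneg_left (htri.trans (add_le_add_left hxa _)) hΛ
    nlinarith [mul_le_mul_of_nonneg_left hd hΛ]
  -- case of two different pieces
  have key2 : ∀ ℓ ℓ', ℓ ≠ ℓ' → ∀ x ∈ V ℓ, ∀ y ∈ V ℓ',
      dist (h x) (h y) ≤ 3 * Λ * dist x y := by
    intro ℓ ℓ' hne x hx y hy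
    obtain ⟨a, ha, hxa⟩ := hnear ℓ x hx
    obtain ⟨a', ha', hya⟩ := hnear ℓ' y hy
    have haU : a ∈ (⋃ ℓ, A ℓ) ∪ W := Or.inl (mem_iUnion.2 ⟨ℓ, ha⟩)
    have haU' : a' ∈ (⋃ ℓ, A ℓ) ∪ W := Or.inl (mem_iUnion.2 ⟨ℓ', ha'⟩)
    have h1 : dist (fl ℓ x) (fl ℓ a) ≤ Λ * dist x a :=
      (hfld ℓ x hx a (hAV ℓ ha)).trans
        (mul_le_mul_of_nonneg_right (hcΛ ℓ) dist_nonneg)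
    have h1' : dist (fl ℓ' y) (fl ℓ' a') ≤ Λ * dist y a' :=
      (hfld ℓ' y hy a' (hAV ℓ' ha')).trans
        (mul_le_mul_of_nonneg_right (hcΛ ℓ') dist_nonneg)
    have h2 : dist (f a) (f a') ≤ Λ * dist a a' := hfd a haU a' haU'
    have hsep' : 8 * b / 10 + 2 * (b/10) ≤ dist a a' := hsep ℓ ℓ' hne a ha a' ha'
    have htri : dist a a' ≤ dist x a + (dist x y + dist y a') := by
      rw [dist_comm x a]
      calc dist a a' ≤ dist a y + dist y a' := dist_triangle _ _ _
        _ ≤ (dist a x + dist x y) + dist y a' :=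
            add_le_add_left (dist_triangle a x y) _
        _ = dist a x + (dist x y + dist y a') := by ring
    have hdxy : 8 * b / 10 ≤ dist x y := by
      have := htri
      nlinarith
    have heq : dist (h x) (h y) ≤
        dist (fl ℓ x) (fl ℓ a) + (dist (f a) (f a') + dist (fl ℓ' a') (fl ℓ' y)) := by
      rw [hhV ℓ x hx, hhV ℓ' y hy, ← hfl_eq ℓ ha, ← hfl_eq ℓ' ha']
      calc dist (fl ℓ x) (fl ℓ' y) ≤ dist (fl ℓ x) (fl ℓ' a') + dist (fl ℓ' a') (fl ℓ' y) :=
            dist_triangle _ _ _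
        _ ≤ (dist (fl ℓ x) (fl ℓ a) + dist (fl ℓ a) (fl ℓ' a')) + dist (fl ℓ' a') (fl ℓ' y) :=
            add_le_add_left (dist_triangle _ _ _) _
        _ = _ := by rw [hfl_eq ℓ ha, hfl_eq ℓ' ha']; ring
    have : dist (h x) (h y) ≤
        Λ * (b/10) + (Λ * (b/10 + (dist x y + b/10)) + Λ * (b/10)) := by
      refine heq.trans (add_le_add (h1.trans ?_) (add_le_add (h2.trans ?_) ?_))
      · exact mul_le_mul_of_nonneg_left hxa hΛ
      · refine mul_le_mul_of_nonneg_left (htri.trans ?_) hΛ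
        linarith
      · rw [dist_comm]
        exact h1'.trans (mul_le_mul_of_nonneg_left hya hΛ)
    nlinarith [mul_le_mul_of_nonneg_left hdxy hΛ]
  intro x hx y hy
  have hcast : ((3 * Λ : NNReal) : ℝ) = 3 * (Λ : ℝ) := by push_cast; ring
  rw [hcast]
  rcases hx with hx | hx
  · obtain ⟨ℓ, hxV⟩ := mem_iUnion.mp hx
    rcases hy with hy | hy
    · obtain ⟨ℓ', hyV⟩ := mem_iUnion.mp hy
      by_cases hne : ℓ = ℓ'
      · subst hne
        rw [hhV ℓ x hxV, hhV ℓ y hyV]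
        refine (hfld ℓ x hxV y hyV).trans ?_
        have : (c ℓ : ℝ) ≤ 3 * Λ := by linarith [hcΛ ℓ]
        exact mul_le_mul_of_nonneg_right this dist_nonneg
      · exact key2 ℓ ℓ' hne x hxV y hyV
    · exact key ℓ x hxV y hy
  · rcases hy with hy | hy
    · obtain ⟨ℓ, hyV⟩ := mem_iUnion.mp hy
      rw [dist_comm, dist_comm x y]
      exact key ℓ y hyV x hx
    · rw [hhW x hx, hhW y hy, dist_self]
      positivity
end

section
/- Let Y be a metric space, S ⊆ Y, K ⊆ S a nonempty compact set, and u : S → ℝ a 1-Lipschitz function with u ≤ 0 exactly on K and u(x) = dist(x, K) for x ∈ S \ K. Let U(y) = inf_{s ∈ S}(u(s) + d(s, y)) be the 1-Lipschitz extension of u to Y, fix z₀ ∈ Y, and let L = − inf_K u ≥ 0 (which is finite by compactness) and D = diam(K ∪ {z₀}). Then for every α ≥ 0, the sublevel set U^{−1}((−∞, α]) is bounded: every point p with U(p) ≤ α satisfies d(p, z₀) ≤ 2α + L + D. -/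
open Metric Set

theorem sublevel_of_extension_bounded {Y : Type*} [MetricSpace Y]
    (S K : Set Y) (hKS : K ⊆ S) (hKne : K.Nonempty) (hKcpt : IsCompact K)
    (u : Y → ℝ) (hu_lip : LipschitzOnWith 1 u S)
    (hu_K : ∀ x ∈ S, (u x ≤ 0 ↔ x ∈ K))
    (hu_dist : ∀ x ∈ S \ K, u x = infDist x K)
    (z₀ : Y) :
    ∀ α : ℝ, 0 ≤ α → ∀ p : Y,
      (⨅ s : S, (u s + dist (s : Y) p)) ≤ α →
      dist p z₀ ≤ 2 * α + (-(sInf (u '' K))) + Metric.diam (K ∪ {z₀}) := by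
  intro α hα p hinf
  set L := -(sInf (u '' K)) with hLdef
  set D := Metric.diam (K ∪ {z₀}) with hDdef
  have hbdd : Bornology.IsBounded (K ∪ {z₀}) := (hKcpt.union isCompact_singleton).isBounded
  have hDz : ∀ k ∈ K, dist k z₀ ≤ D := fun k hk =>
    dist_le_diam_of_mem hbdd (Or.inl hk) (Or.inr rfl)
  have hbddu : BddBelow (u '' K) :=
    (hKcpt.image_of_continuousOn ((hu_lip.continuousOn).mono hKS)).bddBelow
  have hL : 0 ≤ L := by
    obtain ⟨k, hk⟩ := hKne
    have h1 : sInf (u '' K) ≤ u k := csInf_le hbddu (mem_image_of_mem u hk)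
    have h2 : u k ≤ 0 := (hu_K k (hKS hk)).2 hk
    simp only [hLdef]; linarith
  haveI : Nonempty ↥S := (hKne.mono hKS).to_subtype
  have key : dist p z₀ - L - D ≤ ⨅ s : S, (u s + dist (s : Y) p) := by
    apply le_ciInf
    rintro ⟨s, hs⟩
    by_cases hsK : s ∈ K
    · have h1 : sInf (u '' K) ≤ u s := csInf_le hbddu (mem_image_of_mem u hsK)
      have h2 : dist p z₀ ≤ dist s p + dist s z₀ := by
        rw [dist_comm s p]; exact dist_triangle p s z₀
      have h3 := hDz s hsK
      simp only [hLdef] at *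
      linarith
    · have hus : u s = infDist s K := hu_dist s ⟨hs, hsK⟩
      obtain ⟨k, hkK, hk⟩ := hKcpt.exists_infDist_eq_dist hKne s
      have h1 : dist p z₀ ≤ dist p k + dist k z₀ := dist_triangle p k z₀
      have h2 : dist p k ≤ dist p s + dist s k := dist_triangle p s k
      have h3 := hDz k hkK
      rw [dist_comm p s] at h2
      rw [hus, hk]
      linarith
  linarith
end

section
/- Let Y be a metric space, S ⊆ Y, and K ⊆ S nonempty compact with defining function u : S → ℝ (1-Lipschitz, {u ≤ 0} = K, u = dist(·, K) off K). Let U : Y → ℝ be the standard 1-Lipschitz extension of u, and suppose γ > 0 is such that u^{−1}((−∞, 3γ]) ⊆ O for a subset O ⊆ S. Let f : S → ℝ be Λ-Lipschitz with 0 ≤ f ≤ 1 and f ≡ 1 on O. Then the extension of f to S ∪ U^{−1}((−∞, γ]) defined to be 1 on U^{−1}((−∞, γ]) \ S is 2Λ-Lipschitz. -/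
open Metric Set

theorem extension_by_one_lipschitz {Y : Type*} [MetricSpace Y]
    (S K O : Set Y) (hKS : K ⊆ S) (hKne : K.Nonempty) (hKcpt : IsCompact K)
    (hOS : O ⊆ S)
    (u : Y → ℝ) (hu_lip : LipschitzOnWith 1 u S)
    (hu_K : ∀ x ∈ S, (u x ≤ 0 ↔ x ∈ K))
    (hu_dist : ∀ x ∈ S \ K, u x = infDist x K)
    (U : Y → ℝ) (hU : ∀ y, U y = ⨅ s : S, (u s + dist (s : Y) y))
    (γ : ℝ) (hγ : 0 < γ)
    (hsub : {x ∈ S | u x ≤ 3 * γ} ⊆ O)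
    (Λ : NNReal) (f : Y → ℝ) (hf_lip : LipschitzOnWith Λ f S)
    (hf_range : ∀ x ∈ S, f x ∈ Icc (0 : ℝ) 1)
    (hf_O : ∀ x ∈ O, f x = 1)
    (g : Y → ℝ)
    (hg_S : ∀ x ∈ S, g x = f x)
    (hg_one : ∀ y, U y ≤ γ → y ∉ S → g y = 1) :
    LipschitzOnWith (2 * Λ) g (S ∪ {y | U y ≤ γ}) := by
  have hΛ0 : (0:ℝ) ≤ (Λ:ℝ) := Λ.coe_nonneg
  have key : ∀ p, U p ≤ γ → p ∉ S → ∀ q ∈ S,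
      dist (g p) (g q) ≤ 2 * (Λ:ℝ) * dist p q := by
    intro p hUp hpS q hqS
    have hgp : g p = 1 := hg_one p hUp hpS
    have hgq : g q = f q := hg_S q hqS
    by_cases hq3 : u q ≤ 3 * γ
    · have hqO : q ∈ O := hsub ⟨hqS, hq3⟩
      rw [hgp, hgq, hf_O q hqO, dist_self]
      positivity
    · push_neg at hq3
      have hne : Nonempty S := ⟨⟨hKne.choose, hKS hKne.choose_spec⟩⟩
      have hstep : ∀ ε > 0, u q < γ + ε + dist p q := by
        intro ε hε
        have h1 : (⨅ s : S, (u s + dist (s : Y) p)) < γ + ε := by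
          rw [← hU]; linarith
        obtain ⟨s, hs⟩ := exists_lt_of_ciInf_lt h1
        have h2 : dist (u q) (u s) ≤ 1 * dist q (s : Y) :=
          hu_lip.dist_le_mul q hqS s s.2
        have h3 : u q - u s ≤ dist q (s : Y) := by
          calc u q - u s ≤ |u q - u s| := le_abs_self _
          _ = dist (u q) (u s) := (Real.dist_eq _ _).symm
          _ ≤ 1 * dist q (s : Y) := h2
          _ = dist q (s : Y) := one_mul _
        have h4 : dist q (s : Y) ≤ dist q p + dist (s : Y) p := by
          rw [dist_comm (s : Y) p]; exact dist_triangle q p s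
        rw [dist_comm q p] at h4
        linarith
      have huq : u q ≤ γ + dist p q := by
        by_contra h
        push_neg at h
        have := hstep ((u q - γ - dist p q) / 2) (by linarith)
        linarith
      have hγd : γ ≤ dist p q := by
        by_contra h
        push_neg at h
        have := hstep ((3 * γ - γ - dist p q) / 2) (by linarith)
        linarith
      have huq2 : u q ≤ 2 * dist p q := by linarith
      have hqK : q ∉ K := fun h => by
        have := (hu_K q hqS).2 h; linarith
      have hud : u q = infDist q K := hu_dist q ⟨hqS, hqK⟩
      obtain ⟨k, hkK, hk⟩ := hKcpt.exists_infDist_eq_dist hKne q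
      have hkS : k ∈ S := hKS hkK
      have hkO : k ∈ O := hsub ⟨hkS, by
        have := (hu_K k hkS).2 hkK; linarith⟩
      have hfk : f k = 1 := hf_O k hkO
      have hfq := hf_range q hqS
      have hd : dist (f k) (f q) ≤ (Λ:ℝ) * dist k q :=
        hf_lip.dist_le_mul k hkS q hqS
      have hdq : dist k q = u q := by rw [hud, hk, dist_comm]
      rw [hgp, hgq]
      calc dist 1 (f q) = |1 - f q| := Real.dist_eq _ _
        _ = 1 - f q := abs_of_nonneg (by linarith [hfq.2])
        _ = f k - f q := by rw [hfk]
        _ ≤ |f k - f q| := le_abs_self _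
        _ = dist (f k) (f q) := (Real.dist_eq _ _).symm
        _ ≤ (Λ:ℝ) * dist k q := hd
        _ = (Λ:ℝ) * u q := by rw [hdq]
        _ ≤ (Λ:ℝ) * (2 * dist p q) := by
            exact mul_le_mul_of_nonneg_left huq2 hΛ0
        _ = 2 * (Λ:ℝ) * dist p q := by ring
  apply LipschitzOnWith.of_dist_le_mul
  intro x hx y hy
  have hc : ((2 * Λ : NNReal) : ℝ) = 2 * (Λ:ℝ) := by push_cast; ring
  rw [hc]
  by_cases hxS : x ∈ S
  · by_cases hyS : y ∈ S
    · rw [hg_S x hxS, hg_S y hyS]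
      calc dist (f x) (f y) ≤ (Λ:ℝ) * dist x y := hf_lip.dist_le_mul x hxS y hyS
        _ ≤ 2 * (Λ:ℝ) * dist x y := by nlinarith [dist_nonneg (x := x) (y := y)]
    · have hyU : U y ≤ γ := hy.resolve_left hyS
      rw [dist_comm, dist_comm x y]
      exact key y hyU hyS x hxS
  · have hxU : U x ≤ γ := hx.resolve_left hxS
    by_cases hyS : y ∈ S
    · exact key x hxU hxS y hyS
    · have hyU : U y ≤ γ := hy.resolve_left hyS
      rw [hg_one x hxU hxS, hg_one y hyU hyS, dist_self]
      positivity
end
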